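/- r(I_4, L_3) = 15: every oriented graph on 15 vertices contains an independent set of size 4 or a transitive tournament on 3 vertices, and there exists an oriented graph on 14 vertices containing neither. -/

import Mathlib

/-- An oriented graph: no loops, at most one directed edge per pair
(asymmetry implies irreflexivity). -/
def IsOriented {V : Type*} (E : V → V → Prop) : Prop :=
  ∀ x y, E x y → ¬ E y x

/-- The graph contains an independent set of size `m`. -/
def HasIndep {V : Type*} (E : V → V → Prop) (m : ℕ) : Prop :=
  ∃ s : Finset V, s.card = m ∧ ∀ x ∈ s, ∀ y ∈ s, ¬ E x y

/-- The graph contains a transitive tournament on `n` vertices. -/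
def HasTransTour {V : Type*} (E : V → V → Prop) (n : ℕ) : Prop :=
  ∃ f : Fin n ↪ V, ∀ i j : Fin n, i < j → E (f i) (f j)

/-- `r(I_m, L_n)`: the least `k` such that every oriented graph on `k` vertices
contains an independent set of size `m` or a transitive tournament on `n` vertices. -/
noncomputable def ramseyIL (m n : ℕ) : ℕ :=
  sInf {k | ∀ (V : Type) (_ : Fintype V), Fintype.card V = k →
    ∀ E : V → V → Prop, IsOriented E → HasIndep E m ∨ HasTransTour E n}

open scoped Classical
open Finset

section Upper

variable {V : Type*} [Fintype V]

noncomputable def outS (E : V → V → Prop) (v : V) : Finset V :=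
  Finset.univ.filter (fun x => E v x)

noncomputable def inS (E : V → V → Prop) (v : V) : Finset V :=
  Finset.univ.filter (fun x => E x v)

noncomputable def nonS (E : V → V → Prop) (v : V) : Finset V :=
  Finset.univ.filter (fun x => x ≠ v ∧ ¬E v x ∧ ¬E x v)

variable {E : V → V → Prop}

lemma mem_outS {v x : V} : x ∈ outS E v ↔ E v x := by simp [outS]
lemma mem_inS {v x : V} : x ∈ inS E v ↔ E x v := by simp [inS]
lemma mem_nonS {v x : V} : x ∈ nonS E v ↔ x ≠ v ∧ ¬E v x ∧ ¬E x v := by simp [nonS]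

lemma mem_nonS_comm {v x : V} : x ∈ nonS E v ↔ v ∈ nonS E x := by
  simp only [mem_nonS]
  constructor
  · rintro ⟨h1, h2, h3⟩; exact ⟨h1.symm, h3, h2⟩
  · rintro ⟨h1, h2, h3⟩; exact ⟨h1.symm, h3, h2⟩

lemma card_swap (s t : Finset V) (p : V → V → Prop) :
    (∑ a ∈ s, (t.filter (fun b => p a b)).card) = ∑ b ∈ t, (s.filter (fun a => p a b)).card := by
  simp only [Finset.card_filter]
  exact Finset.sum_comm

lemma card_split (hor : IsOriented E) (s : Finset V) (u : V) (hu : u ∈ s) :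
    s.card = (s.filter fun x => E u x).card + (s.filter fun x => E x u).card
      + (s.filter fun x => x ≠ u ∧ ¬E u x ∧ ¬E x u).card + 1 := by
  have hxu : ∀ x, E u x → x ≠ u := fun x h he => hor u u (he ▸ h) (he ▸ h)
  have hux : ∀ x, E x u → x ≠ u := fun x h he => hor u u (he ▸ h) (he ▸ h)
  have e1 : s.filter (fun x => E u x) = (s.erase u).filter (fun x => E u x) := by
    ext x
    simp only [Finset.mem_filter, Finset.mem_erase]
    exact ⟨fun ⟨h1, h2⟩ => ⟨⟨hxu x h2, h1⟩, h2⟩, fun ⟨⟨_, h1⟩, h2⟩ => ⟨h1, h2⟩⟩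
  have e2 : s.filter (fun x => E x u)
      = ((s.erase u).filter (fun x => ¬ E u x)).filter (fun x => E x u) := by
    ext x
    simp only [Finset.mem_filter, Finset.mem_erase]
    constructor
    · rintro ⟨h1, h2⟩; exact ⟨⟨⟨hux x h2, h1⟩, fun h => hor _ _ h h2⟩, h2⟩
    · rintro ⟨⟨⟨_, h1⟩, _⟩, h2⟩; exact ⟨h1, h2⟩
  have e3 : s.filter (fun x => x ≠ u ∧ ¬E u x ∧ ¬E x u)
      = ((s.erase u).filter (fun x => ¬ E u x)).filter (fun x => ¬ E x u) := by
    ext x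
    simp only [Finset.mem_filter, Finset.mem_erase]
    tauto
  have c1 := Finset.card_filter_add_card_filter_not (s := s.erase u)
    (p := fun x => E u x)
  have c2 := Finset.card_filter_add_card_filter_not
    (s := (s.erase u).filter (fun x => ¬ E u x)) (p := fun x => E x u)
  have c3 := Finset.card_erase_add_one hu
  rw [e1, e2, e3]
  omega

lemma four_of_card (s : Finset V) (h : s.card = 4) :
    ∃ a b c d : V, a ∈ s ∧ b ∈ s ∧ c ∈ s ∧ d ∈ s ∧
      a ≠ b ∧ a ≠ c ∧ a ≠ d ∧ b ≠ c ∧ b ≠ d ∧ c ≠ d := by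
  have h0 : s.Nonempty := by rw [← Finset.card_pos]; omega
  obtain ⟨a, ha⟩ := h0
  have h1 : (s.erase a).card = 3 := by rw [Finset.card_erase_of_mem ha]; omega
  obtain ⟨b, c, d, hbc, hbd, hcd, he⟩ := Finset.card_eq_three.mp h1
  have hb : b ∈ s.erase a := by rw [he]; simp
  have hc : c ∈ s.erase a := by rw [he]; simp
  have hd : d ∈ s.erase a := by rw [he]; simp
  exact ⟨a, b, c, d, ha, Finset.mem_of_mem_erase hb, Finset.mem_of_mem_erase hc,
    Finset.mem_of_mem_erase hd, (Finset.ne_of_mem_erase hb).symm,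
    (Finset.ne_of_mem_erase hc).symm, (Finset.ne_of_mem_erase hd).symm, hbc, hbd, hcd⟩

lemma indep_card_le (hI : ¬HasIndep E 4) (s : Finset V)
    (hs : ∀ x ∈ s, ∀ y ∈ s, ¬E x y) : s.card ≤ 3 := by
  by_contra h
  obtain ⟨t, hts, ht⟩ := Finset.exists_subset_card_eq (show 4 ≤ s.card by omega)
  exact hI ⟨t, ht, fun x hx y hy => hs x (hts hx) y (hts hy)⟩

lemma tour_card_le (hTT : ∀ a b c : V, ¬(E a b ∧ E b c ∧ E a c)) (s : Finset V)
    (hs : ∀ x ∈ s, ∀ y ∈ s, x ≠ y → E x y ∨ E y x) : s.card ≤ 3 := by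
  by_contra h
  obtain ⟨t, hts, ht4⟩ := Finset.exists_subset_card_eq (show 4 ≤ s.card by omega)
  obtain ⟨a, b, c, d, ha, hb, hc, hd, hab, hac, had, hbc, hbd, hcd⟩ := four_of_card t ht4
  have two_out : ∀ x y z : V, E x y → E x z → (E y z ∨ E z y) → False := fun x y z h1 h2 h3 =>
    h3.elim (fun h' => hTT x y z ⟨h1, h', h2⟩) (fun h' => hTT x z y ⟨h2, h', h1⟩)
  have two_in : ∀ x y z : V, E y x → E z x → (E y z ∨ E z y) → False := fun x y z h1 h2 h3 =>
    h3.elim (fun h' => hTT y z x ⟨h', h2, h1⟩) (fun h' => hTT z y x ⟨h', h1, h2⟩)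
  have Hab := hs a (hts ha) b (hts hb) hab
  have Hac := hs a (hts ha) c (hts hc) hac
  have Had := hs a (hts ha) d (hts hd) had
  have Hbc := hs b (hts hb) c (hts hc) hbc
  have Hbd := hs b (hts hb) d (hts hd) hbd
  have Hcd := hs c (hts hc) d (hts hd) hcd
  rcases Hab with h1 | h1 <;> rcases Hac with h2 | h2 <;> rcases Had with h3 | h3 <;>
    first
      | exact two_out a b c h1 h2 Hbc
      | exact two_out a b d h1 h3 Hbd
      | exact two_out a c d h2 h3 Hcd
      | exact two_in a b c h1 h2 Hbc
      | exact two_in a b d h1 h3 Hbd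
      | exact two_in a c d h2 h3 Hcd

section Main

variable (hor : IsOriented E) (hTT : ∀ a b c : V, ¬(E a b ∧ E b c ∧ E a c))
  (hI : ¬HasIndep E 4) (hcard : Fintype.card V = 15)

include hor

lemma irr : ∀ x : V, ¬E x x := fun x h => hor x x h h

include hTT

lemma out_indep : ∀ v : V, ∀ x ∈ outS E v, ∀ y ∈ outS E v, ¬E x y := by
  intro v x hx y hy hxy
  exact hTT v x y ⟨mem_outS.mp hx, hxy, mem_outS.mp hy⟩

lemma in_indep : ∀ v : V, ∀ x ∈ inS E v, ∀ y ∈ inS E v, ¬E x y := by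
  intro v x hx y hy hxy
  exact hTT x y v ⟨hxy, mem_inS.mp hy, mem_inS.mp hx⟩

include hI

lemma nonS_indep2 : ∀ v : V, ∀ s ⊆ nonS E v, (∀ x ∈ s, ∀ y ∈ s, ¬E x y) → s.card ≤ 2 := by
  intro v s hsub hind
  have hv : v ∉ s := fun h => ((mem_nonS.mp (hsub h)).1 : v ≠ v) rfl
  have h3 : (insert v s).card ≤ 3 := by
    apply indep_card_le hI
    intro x hx y hy
    rcases Finset.mem_insert.mp hx with rfl | hx' <;>
      rcases Finset.mem_insert.mp hy with rfl | hy'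
    · exact irr hor _
    · exact (mem_nonS.mp (hsub hy')).2.1
    · exact (mem_nonS.mp (hsub hx')).2.2
    · exact hind x hx' y hy'
  rw [Finset.card_insert_of_notMem hv] at h3
  omega

lemma filter_bounds (v : V) (u : V) (hu : u ∈ nonS E v) :
    ((nonS E v).filter fun x => E u x).card ≤ 2 ∧
    ((nonS E v).filter fun x => E x u).card ≤ 2 ∧
    ((nonS E v).filter fun x => x ≠ u ∧ ¬E u x ∧ ¬E x u).card ≤ 3 := by
  refine ⟨?_, ?_, ?_⟩
  · apply nonS_indep2 hor hTT hI v _ (Finset.filter_subset _ _)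
    intro x hx y hy hxy
    exact hTT u x y ⟨(Finset.mem_filter.mp hx).2, hxy, (Finset.mem_filter.mp hy).2⟩
  · apply nonS_indep2 hor hTT hI v _ (Finset.filter_subset _ _)
    intro x hx y hy hxy
    exact hTT x y u ⟨hxy, (Finset.mem_filter.mp hy).2, (Finset.mem_filter.mp hx).2⟩
  · apply tour_card_le hTT
    intro x hx y hy hxy
    by_contra hcon
    push_neg at hcon
    obtain ⟨hx1, hx2⟩ := Finset.mem_filter.mp hx
    obtain ⟨hy1, hy2⟩ := Finset.mem_filter.mp hy
    have hus : u ∉ ({x, y} : Finset V) := by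
      simp only [Finset.mem_insert, Finset.mem_singleton]
      push_neg
      exact ⟨fun h => hx2.1 h.symm, fun h => hy2.1 h.symm⟩
    have hxy2 : ({x, y} : Finset V).card = 2 := by
      rw [Finset.card_insert_of_notMem (by simpa using hxy), Finset.card_singleton]
    have hcard3 : (insert u ({x, y} : Finset V)).card = 3 := by
      rw [Finset.card_insert_of_notMem hus, hxy2]
    have hsub : insert u ({x, y} : Finset V) ⊆ nonS E v := by
      intro z hz
      simp only [Finset.mem_insert, Finset.mem_singleton] at hz
      rcases hz with rfl | rfl | rfl
      · exact hu
      · exact hx1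
      · exact hy1
    have hind : ∀ a ∈ insert u ({x, y} : Finset V), ∀ b ∈ insert u ({x, y} : Finset V),
        ¬E a b := by
      intro a ha b hb
      simp only [Finset.mem_insert, Finset.mem_singleton] at ha hb
      rcases ha with rfl | rfl | rfl <;> rcases hb with rfl | rfl | rfl
      · exact irr hor _
      · exact hx2.2.1
      · exact hy2.2.1
      · exact hx2.2.2
      · exact irr hor _
      · exact hcon.1
      · exact hy2.2.2
      · exact hcon.2
      · exact irr hor _
    have := nonS_indep2 hor hTT hI v _ hsub hind
    omega

include hcard

lemma global_exact : ∀ v : V,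
    (outS E v).card = 3 ∧ (inS E v).card = 3 ∧ (nonS E v).card = 8 := by
  intro v
  have hsplit := card_split hor Finset.univ v (Finset.mem_univ v)
  rw [Finset.card_univ, hcard] at hsplit
  have ho : Finset.univ.filter (fun x => E v x) = outS E v := rfl
  have hi : Finset.univ.filter (fun x => E x v) = inS E v := rfl
  have hn : Finset.univ.filter (fun x => x ≠ v ∧ ¬E v x ∧ ¬E x v) = nonS E v := rfl
  rw [ho, hi, hn] at hsplit
  have b1 : (outS E v).card ≤ 3 := indep_card_le hI _ (out_indep hor hTT v)
  have b2 : (inS E v).card ≤ 3 := indep_card_le hI _ (in_indep hor hTT v)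
  have b3 : (nonS E v).card ≤ 8 := by
    rcases Finset.eq_empty_or_nonempty (nonS E v) with he | ⟨u, hu⟩
    · rw [he]; simp
    · have hs := card_split hor (nonS E v) u hu
      have hb := filter_bounds hor hTT hI v u hu
      omega
  omega

lemma local_exact : ∀ v : V, ∀ u ∈ nonS E v,
    ((nonS E v).filter fun x => E u x).card = 2 ∧
    ((nonS E v).filter fun x => E x u).card = 2 ∧
    ((nonS E v).filter fun x => x ≠ u ∧ ¬E u x ∧ ¬E x u).card = 3 := by
  intro v u hu
  have hs := card_split hor (nonS E v) u hu
  have hb := filter_bounds hor hTT hI v u hu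
  have h8 : (nonS E v).card = 8 := (global_exact hor hTT hI hcard v).2.2
  omega

lemma claim_a (v r : V) (hr : r ∈ nonS E v) :
    ∃ n ∈ nonS E v, n ∈ nonS E r ∧ ∃ i, E i v ∧ i ∈ nonS E r ∧ E n i := by
  by_contra hno
  have hv : v ∈ nonS E r := mem_nonS_comm.mp hr
  have hEvr := (mem_nonS.mp hr).2
  have cO : ((nonS E r).filter fun x => E v x).card = 2 :=
    (local_exact hor hTT hI hcard r v hv).1
  have cI : ((nonS E r).filter fun x => E x v).card = 2 :=
    (local_exact hor hTT hI hcard r v hv).2.1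
  have cN : ((nonS E r).filter fun x => x ≠ v ∧ ¬E v x ∧ ¬E x v).card = 3 :=
    (local_exact hor hTT hI hcard r v hv).2.2
  have hclass : ∀ x, x = v ∨ E v x ∨ E x v ∨ (x ≠ v ∧ ¬E v x ∧ ¬E x v) := by
    intro x
    by_cases h1 : x = v
    · tauto
    · by_cases h2 : E v x
      · tauto
      · by_cases h3 : E x v <;> tauto
  -- Step A : every in-spoke i sees all out-spokes o, i.e. E o i
  have stepA : ∀ i ∈ (nonS E r).filter (fun x => E x v),
      ∀ o ∈ (nonS E r).filter (fun x => E v x), E o i := by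
    intro i hi o ho
    obtain ⟨hiW, hEiv⟩ := Finset.mem_filter.mp hi
    have c2 : ((nonS E r).filter fun x => E x i).card = 2 :=
      (local_exact hor hTT hI hcard r i hiW).2.1
    have hsub : (nonS E r).filter (fun x => E x i) ⊆ (nonS E r).filter (fun x => E v x) := by
      intro x hx
      obtain ⟨hxW, hExi⟩ := Finset.mem_filter.mp hx
      rcases hclass x with rfl | h | h | h
      · exact absurd hEiv (hor x i hExi)
      · exact Finset.mem_filter.mpr ⟨hxW, h⟩
      · exact absurd hExi (in_indep hor hTT v x (mem_inS.mpr h) i (mem_inS.mpr hEiv))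
      · exact absurd hExi (by
          intro hcon
          exact hno ⟨x, mem_nonS.mpr h, hxW, i, hEiv, hiW, hcon⟩)
    have heq : (nonS E r).filter (fun x => E x i) = (nonS E r).filter (fun x => E v x) :=
      Finset.eq_of_subset_of_card_le hsub (by omega)
    rw [← heq] at ho
    exact (Finset.mem_filter.mp ho).2
  -- degrees within W'
  have degW : ∀ u ∈ nonS E r, ((nonS E r).filter (fun x => E u x ∨ E x u)).card = 4 := by
    intro u hu
    have h1 : (Finset.filter (E u) (nonS E r)).card = 2 :=
      (local_exact hor hTT hI hcard r u hu).1
    have h2 := (local_exact hor hTT hI hcard r u hu).2.1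
    rw [Finset.filter_or, Finset.card_union_of_disjoint]
    · omega
    · rw [Finset.disjoint_left]
      intro x hx1 hx2
      exact hor u x (Finset.mem_filter.mp hx1).2 (Finset.mem_filter.mp hx2).2
  -- N' is a tournament
  have Npairs : ∀ x ∈ (nonS E r).filter (fun y => y ≠ v ∧ ¬E v y ∧ ¬E y v),
      ∀ y ∈ (nonS E r).filter (fun y => y ≠ v ∧ ¬E v y ∧ ¬E y v),
      x ≠ y → E x y ∨ E y x := by
    intro x hx y hy hxy
    by_contra hcon
    push_neg at hcon
    obtain ⟨hxW, hxn⟩ := Finset.mem_filter.mp hx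
    obtain ⟨hyW, hyn⟩ := Finset.mem_filter.mp hy
    have hvs : v ∉ ({x, y} : Finset V) := by
      simp only [Finset.mem_insert, Finset.mem_singleton]
      push_neg
      exact ⟨fun h => hxn.1 h.symm, fun h => hyn.1 h.symm⟩
    have hc3 : (insert v ({x, y} : Finset V)).card = 3 := by
      rw [Finset.card_insert_of_notMem hvs,
        Finset.card_insert_of_notMem (by simpa using hxy), Finset.card_singleton]
    have hsub : insert v ({x, y} : Finset V) ⊆ nonS E r := by
      intro z hz
      simp only [Finset.mem_insert, Finset.mem_singleton] at hz
      rcases hz with rfl | rfl | rfl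
      · exact hv
      · exact hxW
      · exact hyW
    have hind : ∀ a ∈ insert v ({x, y} : Finset V), ∀ b ∈ insert v ({x, y} : Finset V),
        ¬E a b := by
      intro a ha b hb
      simp only [Finset.mem_insert, Finset.mem_singleton] at ha hb
      rcases ha with rfl | rfl | rfl <;> rcases hb with rfl | rfl | rfl
      · exact irr hor _
      · exact hxn.2.1
      · exact hyn.2.1
      · exact hxn.2.2
      · exact irr hor _
      · exact hcon.1
      · exact hyn.2.2
      · exact hcon.2
      · exact irr hor _
    have := nonS_indep2 hor hTT hI r _ hsub hind
    omega
  -- each out-spoke o has exactly one neighbour in N'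
  have ko : ∀ o ∈ (nonS E r).filter (fun x => E v x),
      (((nonS E r).filter (fun y => y ≠ v ∧ ¬E v y ∧ ¬E y v)).filter
        (fun x => E o x ∨ E x o)).card = 1 := by
    intro o ho
    obtain ⟨hoW, hEvo⟩ := Finset.mem_filter.mp ho
    have hA := degW o hoW
    have hset : (nonS E r).filter (fun x => E o x ∨ E x o)
        = insert v (((nonS E r).filter (fun x => E x v))
          ∪ (((nonS E r).filter (fun y => y ≠ v ∧ ¬E v y ∧ ¬E y v)).filter
            (fun x => E o x ∨ E x o))) := by
      ext x
      constructor
      · intro hx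
        obtain ⟨hxW, hadj⟩ := Finset.mem_filter.mp hx
        rcases hclass x with rfl | h | h | h
        · exact Finset.mem_insert_self _ _
        · exfalso
          rcases hadj with h' | h'
          · exact out_indep hor hTT v o (mem_outS.mpr hEvo) x (mem_outS.mpr h) h'
          · exact out_indep hor hTT v x (mem_outS.mpr h) o (mem_outS.mpr hEvo) h'
        · exact Finset.mem_insert_of_mem (Finset.mem_union_left _
            (Finset.mem_filter.mpr ⟨hxW, h⟩))
        · exact Finset.mem_insert_of_mem (Finset.mem_union_right _
            (Finset.mem_filter.mpr ⟨Finset.mem_filter.mpr ⟨hxW, h⟩, hadj⟩))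
      · intro hx
        rcases Finset.mem_insert.mp hx with rfl | hx'
        · exact Finset.mem_filter.mpr ⟨hv, Or.inr hEvo⟩
        · rcases Finset.mem_union.mp hx' with h | h
          · exact Finset.mem_filter.mpr ⟨(Finset.mem_filter.mp h).1,
              Or.inl (stepA x h o ho)⟩
          · obtain ⟨hxN, hadj⟩ := Finset.mem_filter.mp h
            exact Finset.mem_filter.mpr ⟨(Finset.mem_filter.mp hxN).1, hadj⟩
    rw [hset] at hA
    have hd1 : Disjoint ((nonS E r).filter (fun x => E x v))
        ((((nonS E r).filter (fun y => y ≠ v ∧ ¬E v y ∧ ¬E y v)).filter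
          (fun x => E o x ∨ E x o))) := by
      rw [Finset.disjoint_left]
      intro x hx1 hx2
      exact ((Finset.mem_filter.mp (Finset.mem_filter.mp hx2).1).2).2.2
        (Finset.mem_filter.mp hx1).2
    have hvn : v ∉ ((nonS E r).filter (fun x => E x v))
        ∪ (((nonS E r).filter (fun y => y ≠ v ∧ ¬E v y ∧ ¬E y v)).filter
          (fun x => E o x ∨ E x o)) := by
      intro hx
      rcases Finset.mem_union.mp hx with h | h
      · exact irr hor v (Finset.mem_filter.mp h).2
      · exact (Finset.mem_filter.mp (Finset.mem_filter.mp h).1).2.1 rfl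
    rw [Finset.card_insert_of_notMem hvn, Finset.card_union_of_disjoint hd1, cI] at hA
    omega
  -- each n in N' has at least one neighbour among out-spokes and among in-spokes,
  -- and exactly two among the spokes
  have an : ∀ n ∈ (nonS E r).filter (fun y => y ≠ v ∧ ¬E v y ∧ ¬E y v),
      (((nonS E r).filter (fun x => E v x)).filter (fun x => E n x ∨ E x n)).card = 1 := by
    intro n hn
    obtain ⟨hnW, hnn⟩ := Finset.mem_filter.mp hn
    have hA := degW n hnW
    have hset : (nonS E r).filter (fun x => E n x ∨ E x n)
        = (((nonS E r).filter (fun y => y ≠ v ∧ ¬E v y ∧ ¬E y v)).erase n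
          ∪ ((nonS E r).filter (fun x => E v x)).filter (fun x => E n x ∨ E x n))
          ∪ ((nonS E r).filter (fun x => E x v)).filter (fun x => E n x ∨ E x n) := by
      ext x
      constructor
      · intro hx
        obtain ⟨hxW, hadj⟩ := Finset.mem_filter.mp hx
        rcases hclass x with rfl | h | h | h
        · exfalso
          rcases hadj with h' | h'
          · exact hnn.2.2 h'
          · exact hnn.2.1 h'
        · exact Finset.mem_union_left _ (Finset.mem_union_right _
            (Finset.mem_filter.mpr ⟨Finset.mem_filter.mpr ⟨hxW, h⟩, hadj⟩))
        · exact Finset.mem_union_right _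
            (Finset.mem_filter.mpr ⟨Finset.mem_filter.mpr ⟨hxW, h⟩, hadj⟩)
        · refine Finset.mem_union_left _ (Finset.mem_union_left _ ?_)
          refine Finset.mem_erase.mpr ⟨?_, Finset.mem_filter.mpr ⟨hxW, h⟩⟩
          rintro rfl
          rcases hadj with h' | h' <;> exact irr hor x h'
      · intro hx
        rcases Finset.mem_union.mp hx with hx' | hx'
        · rcases Finset.mem_union.mp hx' with h | h
          · have hxn := Finset.mem_of_mem_erase h
            have hne : x ≠ n := Finset.ne_of_mem_erase h
            exact Finset.mem_filter.mpr ⟨(Finset.mem_filter.mp hxn).1,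
              Npairs n hn x hxn hne.symm⟩
          · exact Finset.mem_filter.mpr ⟨(Finset.mem_filter.mp (Finset.mem_filter.mp h).1).1,
              (Finset.mem_filter.mp h).2⟩
        · exact Finset.mem_filter.mpr ⟨(Finset.mem_filter.mp (Finset.mem_filter.mp hx').1).1,
            (Finset.mem_filter.mp hx').2⟩
    have hdNO : Disjoint (((nonS E r).filter (fun y => y ≠ v ∧ ¬E v y ∧ ¬E y v)).erase n)
        (((nonS E r).filter (fun x => E v x)).filter (fun x => E n x ∨ E x n)) := by
      rw [Finset.disjoint_left]
      intro x hx1 hx2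
      exact (Finset.mem_filter.mp (Finset.mem_of_mem_erase hx1)).2.2.1
        (Finset.mem_filter.mp (Finset.mem_filter.mp hx2).1).2
    have hdNI : Disjoint ((((nonS E r).filter (fun y => y ≠ v ∧ ¬E v y ∧ ¬E y v)).erase n)
          ∪ ((nonS E r).filter (fun x => E v x)).filter (fun x => E n x ∨ E x n))
        (((nonS E r).filter (fun x => E x v)).filter (fun x => E n x ∨ E x n)) := by
      rw [Finset.disjoint_left]
      intro x hx1 hx2
      have hExv := (Finset.mem_filter.mp (Finset.mem_filter.mp hx2).1).2
      rcases Finset.mem_union.mp hx1 with h | h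
      · exact (Finset.mem_filter.mp (Finset.mem_of_mem_erase h)).2.2.2 hExv
      · exact hor x v hExv (Finset.mem_filter.mp (Finset.mem_filter.mp h).1).2
    rw [hset, Finset.card_union_of_disjoint hdNI, Finset.card_union_of_disjoint hdNO] at hA
    have hEr : (((nonS E r).filter (fun y => y ≠ v ∧ ¬E v y ∧ ¬E y v)).erase n).card = 2 := by
      rw [Finset.card_erase_of_mem hn, cN]
    -- lower bounds
    have ha1 : 1 ≤ (((nonS E r).filter (fun x => E v x)).filter
        (fun x => E n x ∨ E x n)).card := by
      by_contra hcon
      have h0 : (((nonS E r).filter (fun x => E v x)).filter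
          (fun x => E n x ∨ E x n)).card = 0 := by omega
      have hemp := Finset.card_eq_zero.mp h0
      have hnadj : ∀ o ∈ (nonS E r).filter (fun x => E v x), ¬E n o ∧ ¬E o n := by
        intro o ho'
        constructor <;> intro h' <;>
          exact Finset.notMem_empty o (hemp ▸ Finset.mem_filter.mpr ⟨ho', by tauto⟩)
      have hnO : n ∉ (nonS E r).filter (fun x => E v x) := by
        intro h'
        exact hnn.2.1 (Finset.mem_filter.mp h').2
      have hc3 : (insert n ((nonS E r).filter (fun x => E v x))).card = 3 := by
        rw [Finset.card_insert_of_notMem hnO, cO]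
      have hsub : insert n ((nonS E r).filter (fun x => E v x)) ⊆ nonS E r := by
        intro z hz
        rcases Finset.mem_insert.mp hz with rfl | hz'
        · exact hnW
        · exact (Finset.mem_filter.mp hz').1
      have hind : ∀ a ∈ insert n ((nonS E r).filter (fun x => E v x)),
          ∀ b ∈ insert n ((nonS E r).filter (fun x => E v x)), ¬E a b := by
        intro a ha b hb
        rcases Finset.mem_insert.mp ha with rfl | ha' <;>
          rcases Finset.mem_insert.mp hb with rfl | hb'
        · exact irr hor _
        · exact (hnadj b hb').1
        · exact (hnadj a ha').2
        · exact out_indep hor hTT v a (mem_outS.mpr (Finset.mem_filter.mp ha').2)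
            b (mem_outS.mpr (Finset.mem_filter.mp hb').2)
      have := nonS_indep2 hor hTT hI r _ hsub hind
      omega
    have hb1 : 1 ≤ (((nonS E r).filter (fun x => E x v)).filter
        (fun x => E n x ∨ E x n)).card := by
      by_contra hcon
      have h0 : (((nonS E r).filter (fun x => E x v)).filter
          (fun x => E n x ∨ E x n)).card = 0 := by omega
      have hemp := Finset.card_eq_zero.mp h0
      have hnadj : ∀ i ∈ (nonS E r).filter (fun x => E x v), ¬E n i ∧ ¬E i n := by
        intro i hi'
        constructor <;> intro h' <;>
          exact Finset.notMem_empty i (hemp ▸ Finset.mem_filter.mpr ⟨hi', by tauto⟩)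
      have hnI : n ∉ (nonS E r).filter (fun x => E x v) := by
        intro h'
        exact hnn.2.2 (Finset.mem_filter.mp h').2
      have hc3 : (insert n ((nonS E r).filter (fun x => E x v))).card = 3 := by
        rw [Finset.card_insert_of_notMem hnI, cI]
      have hsub : insert n ((nonS E r).filter (fun x => E x v)) ⊆ nonS E r := by
        intro z hz
        rcases Finset.mem_insert.mp hz with rfl | hz'
        · exact hnW
        · exact (Finset.mem_filter.mp hz').1
      have hind : ∀ a ∈ insert n ((nonS E r).filter (fun x => E x v)),
          ∀ b ∈ insert n ((nonS E r).filter (fun x => E x v)), ¬E a b := by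
        intro a ha b hb
        rcases Finset.mem_insert.mp ha with rfl | ha' <;>
          rcases Finset.mem_insert.mp hb with rfl | hb'
        · exact irr hor _
        · exact (hnadj b hb').1
        · exact (hnadj a ha').2
        · exact in_indep hor hTT v a (mem_inS.mpr (Finset.mem_filter.mp ha').2)
            b (mem_inS.mpr (Finset.mem_filter.mp hb').2)
      have := nonS_indep2 hor hTT hI r _ hsub hind
      omega
    omega
  -- double count: sum over O' of ko = sum over N' of an
  have hL : ∑ o ∈ (nonS E r).filter (fun x => E v x),
      (((nonS E r).filter (fun y => y ≠ v ∧ ¬E v y ∧ ¬E y v)).filter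
        (fun x => E o x ∨ E x o)).card = 2 := by
    rw [Finset.sum_congr rfl (fun o ho => ko o ho)]
    simp [cO]
  have hR : ∑ x ∈ (nonS E r).filter (fun y => y ≠ v ∧ ¬E v y ∧ ¬E y v),
      (((nonS E r).filter (fun y => E v y)).filter (fun o => E o x ∨ E x o)).card = 3 := by
    have : ∀ x ∈ (nonS E r).filter (fun y => y ≠ v ∧ ¬E v y ∧ ¬E y v),
        (((nonS E r).filter (fun y => E v y)).filter (fun o => E o x ∨ E x o)).card = 1 := by
      intro x hx
      rw [Finset.filter_congr (fun o _ => (by tauto : (E o x ∨ E x o) ↔ (E x o ∨ E o x)))]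
      exact an x hx
    rw [Finset.sum_congr rfl this]
    simp [cN]
  simp only [Finset.card_filter] at hL hR
  have hcomm := Finset.sum_comm (s := (nonS E r).filter (fun x => E v x))
    (t := (nonS E r).filter (fun y => y ≠ v ∧ ¬E v y ∧ ¬E y v))
    (f := fun o x => if E o x ∨ E x o then 1 else 0)
  exact absurd ((hL.symm.trans hcomm).trans hR) (by norm_num)

lemma no15 : False := by
  have hV : Nonempty V := by
    rw [← Fintype.card_pos_iff]
    omega
  obtain ⟨v⟩ := hV
  have cardO : (outS E v).card = 3 := (global_exact hor hTT hI hcard v).1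
  have cardI : (inS E v).card = 3 := (global_exact hor hTT hI hcard v).2.1
  have cardR : (nonS E v).card = 8 := (global_exact hor hTT hI hcard v).2.2
  -- the set B of non-neighbours of v having an out-edge into inS v
  set B := (nonS E v).filter (fun ρ => ∃ i ∈ inS E v, E ρ i) with hB
  -- lower bound : 8 ≤ 3 * B.card
  have hlow : ∀ r ∈ nonS E v, 1 ≤ (B.filter (fun ρ => ρ ∈ nonS E r)).card := by
    intro r hr
    obtain ⟨n, hnv, hnr, i, hEiv, hir, hEni⟩ := claim_a hor hTT hI hcard v r hr
    refine Finset.card_pos.mpr ⟨n, Finset.mem_filter.mpr ⟨?_, hnr⟩⟩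
    exact Finset.mem_filter.mpr ⟨hnv, ⟨i, mem_inS.mpr hEiv, hEni⟩⟩
  have hlow8 : 8 ≤ ∑ r ∈ nonS E v, (B.filter (fun ρ => ρ ∈ nonS E r)).card := by
    calc (8:ℕ) = ∑ _r ∈ nonS E v, 1 := by
          rw [Finset.sum_const, smul_eq_mul, mul_one, cardR]
      _ ≤ _ := Finset.sum_le_sum hlow
  have hswap1 : ∑ r ∈ nonS E v, (B.filter (fun ρ => ρ ∈ nonS E r)).card
      = ∑ ρ ∈ B, ((nonS E v).filter (fun r => ρ ∈ nonS E r)).card := by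
    simp only [Finset.card_filter]
    exact Finset.sum_comm
  have hin3 : ∀ ρ ∈ B, ((nonS E v).filter (fun r => ρ ∈ nonS E r)).card = 3 := by
    intro ρ hρ
    have hρv : ρ ∈ nonS E v := Finset.mem_of_mem_filter ρ hρ
    have heq : (nonS E v).filter (fun r => ρ ∈ nonS E r)
        = (nonS E v).filter (fun x => x ≠ ρ ∧ ¬E ρ x ∧ ¬E x ρ) := by
      apply Finset.filter_congr
      intro x _
      exact mem_nonS_comm.trans mem_nonS
    rw [heq]
    exact (local_exact hor hTT hI hcard v ρ hρv).2.2
  have hlower : 8 ≤ 3 * B.card := by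
    have : ∑ ρ ∈ B, ((nonS E v).filter (fun r => ρ ∈ nonS E r)).card = 3 * B.card := by
      rw [Finset.sum_congr rfl hin3, Finset.sum_const, smul_eq_mul, mul_comm]
    omega
  -- upper bound : B.card ≤ 2
  have hsubB : B ⊆ (inS E v).biUnion (fun i => (nonS E v).filter (fun ρ => E ρ i)) := by
    intro ρ hρ
    obtain ⟨hρv, i, hi, hEρi⟩ := Finset.mem_filter.mp hρ
    exact Finset.mem_biUnion.mpr ⟨i, hi, Finset.mem_filter.mpr ⟨hρv, hEρi⟩⟩
  have hBle : B.card ≤ ∑ i ∈ inS E v, ((nonS E v).filter (fun ρ => E ρ i)).card :=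
    le_trans (Finset.card_le_card hsubB) Finset.card_biUnion_le
  -- per-i splitting
  have hAi : ∀ i ∈ inS E v, ((nonS E v).filter (fun ρ => E ρ i)).card
      + ((outS E v).filter (fun o => E o i)).card = 3 := by
    intro i hi
    have hEiv : E i v := mem_inS.mp hi
    have hcard3 : (inS E i).card = 3 := (global_exact hor hTT hI hcard i).2.1
    have c := Finset.card_filter_add_card_filter_not (s := inS E i)
      (p := fun x => E v x)
    have eq1 : (inS E i).filter (fun x => E v x) = (outS E v).filter (fun o => E o i) := by
      ext x
      simp only [Finset.mem_filter, inS, outS, Finset.mem_univ, true_and]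
      tauto
    have eq2 : (inS E i).filter (fun x => ¬E v x) = (nonS E v).filter (fun ρ => E ρ i) := by
      ext x
      simp only [Finset.mem_filter, inS, nonS, Finset.mem_univ, true_and]
      constructor
      · rintro ⟨hExi, hnEvx⟩
        refine ⟨⟨?_, hnEvx, ?_⟩, hExi⟩
        · intro hxv
          exact hor i v hEiv (hxv ▸ hExi)
        · intro hExv
          exact in_indep hor hTT v x (mem_inS.mpr hExv) i (mem_inS.mpr hEiv) hExi
      · rintro ⟨⟨_, hnEvx, _⟩, hExi⟩
        exact ⟨hExi, hnEvx⟩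
    rw [eq1, eq2, hcard3] at c
    omega
  have hsumAi : ∑ i ∈ inS E v, ((nonS E v).filter (fun ρ => E ρ i)).card
      + ∑ i ∈ inS E v, ((outS E v).filter (fun o => E o i)).card = 9 := by
    rw [← Finset.sum_add_distrib, Finset.sum_congr rfl hAi, Finset.sum_const, smul_eq_mul,
      cardI]
  have hswap2 : ∑ i ∈ inS E v, ((outS E v).filter (fun o => E o i)).card
      = ∑ o ∈ outS E v, ((inS E v).filter (fun i => E o i)).card := by
    simp only [Finset.card_filter]
    exact Finset.sum_comm
  -- per-o splitting of inS v
  have hBo : ∀ o ∈ outS E v, ((inS E v).filter (fun i => E o i)).card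
      + ((inS E v).filter (fun i => i ∈ nonS E o)).card = 3 := by
    intro o ho
    have hEvo : E v o := mem_outS.mp ho
    have c := Finset.card_filter_add_card_filter_not (s := inS E v)
      (p := fun i => E o i)
    have eq3 : (inS E v).filter (fun i => ¬E o i) = (inS E v).filter (fun i => i ∈ nonS E o) := by
      apply Finset.filter_congr
      intro i hi
      have hEiv : E i v := mem_inS.mp hi
      rw [mem_nonS]
      constructor
      · intro hnoi
        refine ⟨?_, hnoi, ?_⟩
        · intro hio
          exact hor i v hEiv (by rw [hio] at hEiv ⊢; exact hEvo)
        · intro hEio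
          exact hTT i v o ⟨hEiv, hEvo, hEio⟩
      · rintro ⟨_, hnoi, _⟩
        exact hnoi
    rw [eq3, cardI] at c
    exact c
  -- sum over o of the non-neighbour-in-I counts is 2
  have hpart : ∀ o ∈ outS E v, 8 = 2 + ((inS E v).filter (fun i => i ∈ nonS E o)).card
      + ((nonS E v).filter (fun x => x ∈ nonS E o)).card := by
    intro o ho
    have hEvo : E v o := mem_outS.mp ho
    have card8 : (nonS E o).card = 8 := (global_exact hor hTT hI hcard o).2.2
    have c1 := Finset.card_filter_add_card_filter_not (s := nonS E o)
      (p := fun x => E v x)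
    have c2 := Finset.card_filter_add_card_filter_not
      (s := (nonS E o).filter (fun x => ¬E v x)) (p := fun x => E x v)
    have eqA : (nonS E o).filter (fun x => E v x) = (outS E v).erase o := by
      ext x
      simp only [Finset.mem_filter, Finset.mem_erase, nonS, outS, Finset.mem_univ, true_and]
      constructor
      · rintro ⟨⟨hxo, _, _⟩, hEvx⟩
        exact ⟨hxo, hEvx⟩
      · rintro ⟨hxo, hEvx⟩
        refine ⟨⟨hxo, ?_, ?_⟩, hEvx⟩
        · exact out_indep hor hTT v o (mem_outS.mpr hEvo) x (mem_outS.mpr hEvx)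
        · exact out_indep hor hTT v x (mem_outS.mpr hEvx) o (mem_outS.mpr hEvo)
    have eqB : ((nonS E o).filter (fun x => ¬E v x)).filter (fun x => E x v)
        = (inS E v).filter (fun i => i ∈ nonS E o) := by
      ext x
      simp only [Finset.mem_filter, inS, Finset.mem_univ, true_and]
      constructor
      · rintro ⟨⟨hxno, _⟩, hExv⟩
        exact ⟨hExv, hxno⟩
      · rintro ⟨hExv, hxno⟩
        exact ⟨⟨hxno, fun h => hor x v hExv h⟩, hExv⟩
    have eqC : ((nonS E o).filter (fun x => ¬E v x)).filter (fun x => ¬E x v)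
        = (nonS E v).filter (fun x => x ∈ nonS E o) := by
      ext x
      simp only [Finset.mem_filter]
      constructor
      · rintro ⟨⟨hxno, hnEvx⟩, hnExv⟩
        have hxv : x ≠ v := by
          rintro rfl
          exact (mem_nonS.mp hxno).2.2 hEvo
        exact ⟨mem_nonS.mpr ⟨hxv, hnEvx, hnExv⟩, hxno⟩
      · rintro ⟨hxnv, hxno⟩
        obtain ⟨_, hnEvx, hnExv⟩ := mem_nonS.mp hxnv
        exact ⟨⟨hxno, hnEvx⟩, hnExv⟩
    have ceA : ((outS E v).erase o).card = 2 := by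
      rw [Finset.card_erase_of_mem ho, cardO]
    rw [eqA, ceA, card8] at c1
    rw [eqB, eqC] at c2
    omega
  have hsum3 : ∑ o ∈ outS E v, (2 + ((inS E v).filter (fun i => i ∈ nonS E o)).card
      + ((nonS E v).filter (fun x => x ∈ nonS E o)).card) = 24 := by
    have : ∀ o ∈ outS E v, (2 + ((inS E v).filter (fun i => i ∈ nonS E o)).card
        + ((nonS E v).filter (fun x => x ∈ nonS E o)).card) = 8 :=
      fun o ho => (hpart o ho).symm
    rw [Finset.sum_congr rfl this, Finset.sum_const, smul_eq_mul, cardO]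
  have hswap3 : ∑ o ∈ outS E v, ((nonS E v).filter (fun x => x ∈ nonS E o)).card
      = ∑ x ∈ nonS E v, ((outS E v).filter (fun o => x ∈ nonS E o)).card := by
    simp only [Finset.card_filter]
    exact Finset.sum_comm
  have hg2 : ∀ x ∈ nonS E v, ((outS E v).filter (fun o => x ∈ nonS E o)).card = 2 := by
    intro x hx
    have hvx : v ∈ nonS E x := mem_nonS_comm.mp hx
    have eqD : (outS E v).filter (fun o => x ∈ nonS E o)
        = (nonS E x).filter (fun y => E v y) := by
      ext o
      simp only [Finset.mem_filter, outS, Finset.mem_univ, true_and]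
      constructor
      · rintro ⟨hEvo, hxno⟩
        exact ⟨mem_nonS_comm.mp hxno, hEvo⟩
      · rintro ⟨honx, hEvo⟩
        exact ⟨hEvo, mem_nonS_comm.mp honx⟩
    rw [eqD]
    exact (local_exact hor hTT hI hcard x v hvx).1
  have hsumg : ∑ x ∈ nonS E v, ((outS E v).filter (fun o => x ∈ nonS E o)).card = 16 := by
    rw [Finset.sum_congr rfl hg2, Finset.sum_const, smul_eq_mul, cardR]
  -- assemble
  have e1 : ∑ o ∈ outS E v, ((inS E v).filter (fun i => i ∈ nonS E o)).card = 2 := by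
    have hd := Finset.sum_add_distrib (s := outS E v)
      (f := fun o => 2 + ((inS E v).filter (fun i => i ∈ nonS E o)).card)
      (g := fun o => ((nonS E v).filter (fun x => x ∈ nonS E o)).card)
    have hd2 := Finset.sum_add_distrib (s := outS E v)
      (f := fun _o => (2:ℕ))
      (g := fun o => ((inS E v).filter (fun i => i ∈ nonS E o)).card)
    have hc : ∑ _o ∈ outS E v, (2:ℕ) = 6 := by
      rw [Finset.sum_const, smul_eq_mul, cardO]
    rw [hswap3, hsumg] at hd
    rw [hc] at hd2
    rw [hd2] at hd
    omega
  have e2 : ∑ o ∈ outS E v, ((inS E v).filter (fun i => E o i)).card = 7 := by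
    have hd := Finset.sum_add_distrib (s := outS E v)
      (f := fun o => ((inS E v).filter (fun i => E o i)).card)
      (g := fun o => ((inS E v).filter (fun i => i ∈ nonS E o)).card)
    have : ∑ o ∈ outS E v, (((inS E v).filter (fun i => E o i)).card
        + ((inS E v).filter (fun i => i ∈ nonS E o)).card) = 9 := by
      rw [Finset.sum_congr rfl hBo, Finset.sum_const, smul_eq_mul, cardO]
    omega
  have e3 : ∑ i ∈ inS E v, ((nonS E v).filter (fun ρ => E ρ i)).card = 2 := by
    rw [hswap2, e2] at hsumAi
    omega
  rw [e3] at hBle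
  omega

end Main

theorem upper15 (V : Type) [Fintype V] (E : V → V → Prop) (hcard : Fintype.card V = 15)
    (hor : IsOriented E) :
    HasIndep E 4 ∨ ∃ a b c : V, E a b ∧ E b c ∧ E a c := by
  by_cases hTT : ∃ a b c : V, E a b ∧ E b c ∧ E a c
  · exact Or.inr hTT
  · left
    by_contra hI
    have hTT' : ∀ a b c : V, ¬(E a b ∧ E b c ∧ E a c) := fun a b c h => hTT ⟨a, b, c, h⟩
    exact no15 hor hTT' hI hcard

theorem transTour_of_triple {V : Type*} (E : V → V → Prop) (hor : IsOriented E)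
    (h : ∃ a b c : V, E a b ∧ E b c ∧ E a c) : HasTransTour E 3 := by
  obtain ⟨a, b, c, h1, h2, h3⟩ := h
  have irr : ∀ x : V, ¬E x x := fun x h' => hor x x h' h'
  have hab : a ≠ b := fun he => irr b (he ▸ h1)
  have hbc : b ≠ c := fun he => irr c (he ▸ h2)
  have hac : a ≠ c := fun he => irr c (he ▸ h3)
  refine ⟨⟨![a, b, c], ?_⟩, ?_⟩
  · intro i j hij
    fin_cases i <;> fin_cases j <;> simp_all
  · intro i j hij
    fin_cases i <;> fin_cases j <;> simp_all <;> assumption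

theorem triple_of_transTour {V : Type*} (E : V → V → Prop) (h : HasTransTour E 3) :
    ∃ a b c : V, E a b ∧ E b c ∧ E a c := by
  obtain ⟨f, hf⟩ := h
  exact ⟨f 0, f 1, f 2, hf 0 1 (by decide), hf 1 2 (by decide), hf 0 2 (by decide)⟩

def M14 : ℕ := 12999022370681924504026959330982991681512256320239388327950
def N14 : ℕ := 11224269375617192233988528178265002828924454115931150565248

def E14 (i j : Fin 14) : Prop := Nat.testBit M14 (14 * i.val + j.val) = true
def nadj (i j : Fin 14) : Bool := Nat.testBit N14 (14 * i.val + j.val)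

instance : DecidableRel E14 := fun _ _ => inferInstanceAs (Decidable (_ = true))

theorem E14_oriented : IsOriented E14 := by
  have h : ∀ i j : Fin 14, E14 i j → ¬ E14 j i := by decide
  exact h

theorem E14_noTT : ∀ a b c : Fin 14, ¬(E14 a b ∧ E14 b c ∧ E14 a c) := by decide

theorem nadj_spec : ∀ i j : Fin 14, nadj i j = true ↔ (i ≠ j ∧ ¬E14 i j ∧ ¬E14 j i) := by
  decide

set_option maxHeartbeats 4000000 in
theorem E14_noI4 : ∀ a b c d : Fin 14,
    (nadj a b && nadj a c && nadj a d && nadj b c && nadj b d && nadj c d) = false := by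
  decide

theorem push_noIndep {W : Type*} [Fintype W] (E' : W → W → Prop) (g : W → Fin 14)
    (hg : Function.Injective g)
    (hpres : ∀ x y : W, E14 (g x) (g y) → E' x y) : ¬HasIndep E' 4 := by
  rintro ⟨s, hs, hind⟩
  obtain ⟨a, b, c, d, ha, hb, hc, hd, hab, hac, had, hbc, hbd, hcd⟩ := four_of_card s hs
  have mk : ∀ x y : W, x ∈ s → y ∈ s → x ≠ y → nadj (g x) (g y) = true := by
    intro x y hx hy hxy
    refine (nadj_spec _ _).mpr ⟨fun h => hxy (hg h), ?_, ?_⟩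
    · exact fun h => hind x hx y hy (hpres x y h)
    · exact fun h => hind y hy x hx (hpres y x h)
  have := E14_noI4 (g a) (g b) (g c) (g d)
  rw [mk a b ha hb hab, mk a c ha hc hac, mk a d ha hd had, mk b c hb hc hbc,
    mk b d hb hd hbd, mk c d hc hd hcd] at this
  simp at this

theorem E14_noIndep : ¬HasIndep E14 4 :=
  push_noIndep E14 id Function.injective_id (fun _ _ h => h)

theorem lower_counterexample (m : ℕ) (hm : m ≤ 14) :
    ¬(∀ (V : Type) (_ : Fintype V), Fintype.card V = m →
      ∀ E : V → V → Prop, IsOriented E → HasIndep E 4 ∨ HasTransTour E 3) := by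
  intro h
  set E' : Fin m → Fin m → Prop := fun i j => E14 (Fin.castLE hm i) (Fin.castLE hm j) with hE'
  have hor' : IsOriented E' := fun x y hxy => E14_oriented _ _ hxy
  rcases h (Fin m) inferInstance (by simp) E' hor' with hc | hc
  · exact push_noIndep E' (Fin.castLE hm) (Fin.castLE_injective hm) (fun _ _ hh => hh) hc
  · obtain ⟨a, b, c, h1, h2, h3⟩ := triple_of_transTour E' hc
    exact E14_noTT _ _ _ ⟨h1, h2, h3⟩


end Upper

theorem stmt16 :
    ramseyIL 4 3 = 15 ∧
    (∀ (V : Type) (_ : Fintype V) (E : V → V → Prop),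
      Fintype.card V = 15 → IsOriented E →
      HasIndep E 4 ∨ ∃ a b c : V, E a b ∧ E b c ∧ E a c) ∧
    (∃ (V : Type) (_ : Fintype V) (E : V → V → Prop),
      Fintype.card V = 14 ∧ IsOriented E ∧ ¬ HasIndep E 4 ∧
        ¬ ∃ a b c : V, E a b ∧ E b c ∧ E a c) := by
  have h15 : 15 ∈ {k | ∀ (V : Type) (_ : Fintype V), Fintype.card V = k →
      ∀ E : V → V → Prop, IsOriented E → HasIndep E 4 ∨ HasTransTour E 3} := by
    intro V instV hc E hor
    rcases @upper15 V instV E hc hor with h | h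
    · exact Or.inl h
    · exact Or.inr (transTour_of_triple E hor h)
  have hge : ∀ m ∈ {k | ∀ (V : Type) (_ : Fintype V), Fintype.card V = k →
      ∀ E : V → V → Prop, IsOriented E → HasIndep E 4 ∨ HasTransTour E 3}, 15 ≤ m := by
    intro m hm
    by_contra hlt
    exact lower_counterexample m (by omega) hm
  refine ⟨?_, ?_, ?_⟩
  · have hSne : ({k | ∀ (V : Type) (_ : Fintype V), Fintype.card V = k →
        ∀ E : V → V → Prop, IsOriented E → HasIndep E 4 ∨ HasTransTour E 3} : Set ℕ).Nonempty :=
      ⟨15, h15⟩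
    exact le_antisymm (Nat.sInf_le h15) (hge _ (Nat.sInf_mem hSne))
  · intro V instV E hc hor
    exact @upper15 V instV E hc hor
  · refine ⟨Fin 14, inferInstance, E14, by simp, E14_oriented, E14_noIndep, ?_⟩
    rintro ⟨a, b, c, h1, h2, h3⟩
    exact E14_noTT a b c ⟨h1, h2, h3⟩
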